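/- Let G be a finite graph with two subgraphs G_X, G_Y such that G = G_X ∪ G_Y and G_X ∩ G_Y is connected. If B_X and B_Y are generating sets of the cycle spaces of G_X and G_Y respectively, then B_X ∪ B_Y generates the cycle space of G. Consequently bn(G) ≤ bn(G_X) + bn(G_Y). -/

import Mathlib

variable {V : Type*} [Fintype V] [DecidableEq V]

/-- An F2-cycle relative to an edge set `E`: a finite set of edges, all belonging to `E`,
in which every vertex has even degree. -/
def IsF2CycleIn (E : Set (Sym2 V)) (C : Finset (Sym2 V)) : Prop :=
  (∀ e ∈ C, e ∈ E) ∧ ∀ v : V, Even ((C.filter (fun e => v ∈ e)).card)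

/-- `B` generates the cycle space of the graph with edge set `E`: every F2-cycle is a
symmetric difference of a subfamily of `B`. -/
def GeneratesIn (E : Set (Sym2 V)) (B : List (Finset (Sym2 V))) : Prop :=
  ∀ C : Finset (Sym2 V), IsF2CycleIn E C →
    ∃ l : List (Finset (Sym2 V)), l.Sublist B ∧ C = l.foldr symmDiff ∅

/-- The basis number of the graph with edge set `E`: the least `k` such that some
family of F2-cycles generating the cycle space uses each edge at most `k` times. -/
noncomputable def bnSet (E : Set (Sym2 V)) : ℕ :=
  sInf {k | ∃ B : List (Finset (Sym2 V)), (∀ X ∈ B, IsF2CycleIn E X) ∧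
    GeneratesIn E B ∧ ∀ e : Sym2 V, B.countP (fun X => decide (e ∈ X)) ≤ k}

/-- The basis number of a graph. -/
noncomputable def SimpleGraph.bn (G : SimpleGraph V) : ℕ := bnSet G.edgeSet

open scoped symmDiff

section AuxLemmas

private lemma even_card_symmDiff {α : Type*} [DecidableEq α] (a b : Finset α) :
    Even (a ∆ b).card ↔ (Even a.card ↔ Even b.card) := by
  have hd : Disjoint (a \ b) (b \ a) := disjoint_sdiff_sdiff
  have h3 : (a ∆ b).card = (a \ b).card + (b \ a).card := by
    rw [symmDiff_def, Finset.sup_eq_union, Finset.card_union_of_disjoint hd]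
  have h1 := Finset.card_sdiff_add_card_inter a b
  have h2 := Finset.card_sdiff_add_card_inter b a
  have h4 : (a ∩ b).card = (b ∩ a).card := by rw [Finset.inter_comm]
  rw [Nat.even_iff, Nat.even_iff, Nat.even_iff]
  omega

private lemma filter_symmDiff' {α : Type*} [DecidableEq α] (p : α → Prop) [DecidablePred p]
    (a b : Finset α) : (a ∆ b).filter p = (a.filter p) ∆ (b.filter p) := by
  ext x
  simp only [Finset.mem_filter, Finset.mem_symmDiff]
  tauto

variable {V : Type*} [Fintype V] [DecidableEq V]

private lemma even_deg_symmDiff (a b : Finset (Sym2 V)) (v : V) :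
    Even (((a ∆ b).filter (fun e => v ∈ e)).card) ↔
      (Even ((a.filter (fun e => v ∈ e)).card) ↔ Even ((b.filter (fun e => v ∈ e)).card)) := by
  rw [filter_symmDiff', even_card_symmDiff]

private lemma odd_deg_symmDiff (a b : Finset (Sym2 V)) (v : V) :
    Odd (((a ∆ b).filter (fun e => v ∈ e)).card) ↔
      (Odd ((a.filter (fun e => v ∈ e)).card) ↔ ¬ Odd ((b.filter (fun e => v ∈ e)).card)) := by
  rw [← Nat.not_even_iff_odd, ← Nat.not_even_iff_odd, ← Nat.not_even_iff_odd,
    even_deg_symmDiff]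
  tauto

private lemma card_filter_toFinset {α : Type*} [DecidableEq α] (l : List α) (hl : l.Nodup)
    (p : α → Prop) [DecidablePred p] :
    (l.toFinset.filter p).card = l.countP (fun a => decide (p a)) := by
  have h : l.toFinset.filter p = (l.filter (fun a => decide (p a))).toFinset := by
    ext a
    simp only [Finset.mem_filter, List.mem_toFinset, List.mem_filter, decide_eq_true_eq]
  rw [h, List.card_toFinset, (hl.filter _).dedup, List.countP_eq_length_filter]

private lemma exists_path_join {G : SimpleGraph V} (H : G.Subgraph) (hconn : H.Connected)
    {t v0 : V} (ht : t ∈ H.verts) (hv : v0 ∈ H.verts) :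
    ∃ J : Finset (Sym2 V), (∀ e ∈ J, e ∈ H.edgeSet) ∧
      ∀ w : V, (Odd ((J.filter (fun e => w ∈ e)).card) ↔ (t ≠ v0 ∧ (w = t ∨ w = v0))) := by
  classical
  obtain ⟨w0⟩ := hconn ⟨t, ht⟩ ⟨v0, hv⟩
  have hinj : Function.Injective H.hom := by
    rw [SimpleGraph.Subgraph.coe_hom]
    exact Subtype.val_injective
  let q : G.Walk t v0 := (w0.toPath : H.coe.Walk ⟨t, ht⟩ ⟨v0, hv⟩).map H.hom
  have hq : q.IsPath := SimpleGraph.Walk.map_isPath_of_injective hinj w0.toPath.2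
  refine ⟨q.edges.toFinset, ?_, ?_⟩
  · intro e he
    rw [List.mem_toFinset] at he
    rw [show q.edges = _ from SimpleGraph.Walk.edges_map .., List.mem_map] at he
    obtain ⟨e', he', rfl⟩ := he
    have : e' ∈ H.coe.edgeSet := SimpleGraph.Walk.edges_subset_edgeSet _ he'
    rw [← H.image_coe_edgeSet_coe]
    exact ⟨e', this, by simp [SimpleGraph.Subgraph.coe_hom]⟩
  · intro w
    rw [← Nat.not_even_iff_odd, card_filter_toFinset _ hq.isTrail.edges_nodup,
      hq.isTrail.even_countP_edges_iff w]
    constructor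
    · intro h
      push_neg at h
      exact ⟨h.1, by tauto⟩
    · rintro ⟨h1, h2⟩ h3
      rcases h2 with rfl | rfl
      · exact (h3 h1).1 rfl
      · exact (h3 h1).2 rfl

private lemma exists_tjoin {G : SimpleGraph V} (H : G.Subgraph) (hconn : H.Connected)
    {v0 : V} (hv : v0 ∈ H.verts) (T : Finset V) (hT : ∀ t ∈ T, t ∈ H.verts) :
    ∃ J : Finset (Sym2 V), (∀ e ∈ J, e ∈ H.edgeSet) ∧
      ∀ w : V, (Odd ((J.filter (fun e => w ∈ e)).card) ↔
        ((w ∈ T) ↔ ¬ (Odd T.card ∧ w = v0))) := by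
  classical
  revert hT
  refine Finset.induction_on T ?_ ?_
  · intro _
    refine ⟨∅, by simp, ?_⟩
    intro w
    simp [Nat.odd_iff]
  · rintro a T' ha ih hT
    obtain ⟨J', hJ'e, hJ'p⟩ := ih (fun t h => hT t (Finset.mem_insert_of_mem h))
    obtain ⟨Jp, hJpe, hJpp⟩ :=
      exists_path_join H hconn (hT a (Finset.mem_insert_self a T')) hv
    refine ⟨J' ∆ Jp, ?_, ?_⟩
    · intro e he
      rcases Finset.mem_symmDiff.mp he with ⟨h, _⟩ | ⟨h, _⟩
      exacts [hJ'e e h, hJpe e h]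
    · intro w
      rw [odd_deg_symmDiff, hJ'p w, hJpp w, Finset.mem_insert,
        Finset.card_insert_of_notMem ha, Nat.odd_add_one]
      have e1 : w = a → w ∉ T' := fun h => h ▸ ha
      by_cases h2 : w = a <;> by_cases h3 : w = v0 <;> by_cases h4 : a = v0 <;>
        by_cases h5 : w ∈ T' <;> by_cases h6 : Odd T'.card <;>
        simp_all <;> tauto

private lemma foldr_symmDiff_append (l1 l2 : List (Finset (Sym2 V))) :
    (l1 ++ l2).foldr symmDiff ∅ = (l1.foldr symmDiff ∅) ∆ (l2.foldr symmDiff ∅) := by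
  induction l1 with
  | nil =>
    rw [List.nil_append, List.foldr_nil, show (∅ : Finset (Sym2 V)) = ⊥ from rfl, bot_symmDiff]
  | cons a l ih => simp [ih, symmDiff_assoc]

private lemma generates_aux {G : SimpleGraph V} (GX GY : G.Subgraph)
    (hunion : GX ⊔ GY = ⊤) (hconn : (GX ⊓ GY).Connected)
    (BX BY : List (Finset (Sym2 V)))
    (hBX : GeneratesIn GX.edgeSet BX) (hBY : GeneratesIn GY.edgeSet BY) :
    GeneratesIn G.edgeSet (BX ++ BY) := by
  classical
  rintro C ⟨hCE, hCdeg⟩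
  set CX' := C.filter (fun e => e ∈ GX.edgeSet) with hCX'def
  set CY' := C \ CX' with hCY'def
  have hCsymm : C = CX' ∆ CY' := by
    ext e
    simp only [hCY'def, Finset.mem_symmDiff, Finset.mem_sdiff, hCX'def, Finset.mem_filter]
    tauto
  have hCXe : ∀ e ∈ CX', e ∈ GX.edgeSet := fun e he => (Finset.mem_filter.mp he).2
  have hCYe : ∀ e ∈ CY', e ∈ GY.edgeSet := by
    intro e he
    rw [hCY'def, Finset.mem_sdiff] at he
    have hE : e ∈ GX.edgeSet ∪ GY.edgeSet := by
      rw [← SimpleGraph.Subgraph.edgeSet_sup, hunion, SimpleGraph.Subgraph.edgeSet_top]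
      exact hCE e he.1
    rcases hE with h | h
    · exact absurd (Finset.mem_filter.mpr ⟨he.1, h⟩) he.2
    · exact h
  have hpar : ∀ w : V, (Odd ((CX'.filter (fun e => w ∈ e)).card) ↔
      Odd ((CY'.filter (fun e => w ∈ e)).card)) := by
    intro w
    have h := even_deg_symmDiff CX' CY' w
    rw [← hCsymm] at h
    have h2 := hCdeg w
    rw [← Nat.not_even_iff_odd, ← Nat.not_even_iff_odd]
    tauto
  set T : Finset V :=
    Finset.univ.filter (fun v => Odd ((CX'.filter (fun e => v ∈ e)).card)) with hTdef
  have hmemT : ∀ w : V, w ∈ T ↔ Odd ((CX'.filter (fun e => w ∈ e)).card) := by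
    intro w; simp [hTdef]
  have hvert : ∀ (D : Finset (Sym2 V)) (H' : G.Subgraph), (∀ e ∈ D, e ∈ H'.edgeSet) →
      ∀ w : V, Odd ((D.filter (fun e => w ∈ e)).card) → w ∈ H'.verts := by
    intro D H' hD w hw
    have hne : (D.filter (fun e => w ∈ e)).Nonempty := by
      rw [Finset.nonempty_iff_ne_empty]
      intro h
      rw [h] at hw
      simp at hw
    obtain ⟨e, he⟩ := hne
    rw [Finset.mem_filter] at he
    have heD := hD e he.1
    induction e using Sym2.ind with
    | _ x y =>
      rw [SimpleGraph.Subgraph.mem_edgeSet] at heD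
      rcases Sym2.mem_iff.mp he.2 with rfl | rfl
      · exact H'.edge_vert heD
      · exact H'.edge_vert heD.symm
  have hTverts : ∀ t ∈ T, t ∈ (GX ⊓ GY).verts := by
    intro t htT
    rw [SimpleGraph.Subgraph.verts_inf]
    have h1 := (hmemT t).mp htT
    exact ⟨hvert CX' GX hCXe t h1, hvert CY' GY hCYe t ((hpar t).mp h1)⟩
  have hTeven : Even T.card := by
    rw [hTdef, ← Finset.even_sum_iff_even_card_odd]
    have hsum : ∑ v : V, ((CX'.filter (fun e => v ∈ e)).card)
        = ∑ e ∈ CX', (Finset.univ.filter (fun v : V => v ∈ e)).card := by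
      simp only [Finset.card_filter]
      rw [Finset.sum_comm]
    rw [hsum]
    have h2 : ∀ e ∈ CX', (Finset.univ.filter (fun v : V => v ∈ e)).card = 2 := by
      intro e he
      have hnd : ¬ e.IsDiag := G.not_isDiag_of_mem_edgeSet (GX.edgeSet_subset (hCXe e he))
      induction e using Sym2.ind with
      | _ x y =>
        have hxy : x ≠ y := by
          intro h
          exact hnd (by simp [h, Sym2.isDiag_iff_proj_eq])
        have : Finset.univ.filter (fun v : V => v ∈ s(x, y)) = {x, y} := by
          ext v
          simp [Sym2.mem_iff]
        rw [this, Finset.card_insert_of_notMem (by simp [hxy]), Finset.card_singleton]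
    rw [Finset.sum_congr rfl h2, Finset.sum_const, smul_eq_mul]
    exact ⟨CX'.card, by ring⟩
  obtain ⟨v0, hv0⟩ := (SimpleGraph.Subgraph.connected_iff.mp hconn).2
  obtain ⟨J, hJe, hJp⟩ := exists_tjoin (GX ⊓ GY) hconn hv0 T hTverts
  have hnotodd : ¬ Odd T.card := Nat.not_odd_iff_even.mpr hTeven
  have hJodd : ∀ w : V, (Odd ((J.filter (fun e => w ∈ e)).card) ↔ w ∈ T) := by
    intro w
    rw [hJp w]
    simp [hnotodd]
  have hJX : ∀ e ∈ J, e ∈ GX.edgeSet := by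
    intro e h
    have := hJe e h
    rw [SimpleGraph.Subgraph.edgeSet_inf] at this
    exact this.1
  have hJY : ∀ e ∈ J, e ∈ GY.edgeSet := by
    intro e h
    have := hJe e h
    rw [SimpleGraph.Subgraph.edgeSet_inf] at this
    exact this.2
  have hCXcyc : IsF2CycleIn GX.edgeSet (CX' ∆ J) := by
    constructor
    · intro e he
      rcases Finset.mem_symmDiff.mp he with ⟨h, _⟩ | ⟨h, _⟩
      exacts [hCXe e h, hJX e h]
    · intro w
      rw [even_deg_symmDiff, ← Nat.not_odd_iff_even, ← Nat.not_odd_iff_even,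
        hJodd w, hmemT w]
  have hCYcyc : IsF2CycleIn GY.edgeSet (CY' ∆ J) := by
    constructor
    · intro e he
      rcases Finset.mem_symmDiff.mp he with ⟨h, _⟩ | ⟨h, _⟩
      exacts [hCYe e h, hJY e h]
    · intro w
      rw [even_deg_symmDiff, ← Nat.not_odd_iff_even, ← Nat.not_odd_iff_even,
        hJodd w, hmemT w, ← hpar w]
  obtain ⟨lX, hlX, hlXeq⟩ := hBX _ hCXcyc
  obtain ⟨lY, hlY, hlYeq⟩ := hBY _ hCYcyc
  refine ⟨lX ++ lY, List.Sublist.append hlX hlY, ?_⟩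
  rw [foldr_symmDiff_append, ← hlXeq, ← hlYeq]
  have : (CX' ∆ J) ∆ (CY' ∆ J) = CX' ∆ CY' := by
    ext e
    simp only [Finset.mem_symmDiff]
    tauto
  rw [this, ← hCsymm]

private lemma bnSet_spec (E : Set (Sym2 V)) :
    ∃ B : List (Finset (Sym2 V)), (∀ X ∈ B, IsF2CycleIn E X) ∧
      GeneratesIn E B ∧ ∀ e : Sym2 V, B.countP (fun X => decide (e ∈ X)) ≤ bnSet E := by
  classical
  have hne : {k | ∃ B : List (Finset (Sym2 V)), (∀ X ∈ B, IsF2CycleIn E X) ∧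
      GeneratesIn E B ∧ ∀ e : Sym2 V, B.countP (fun X => decide (e ∈ X)) ≤ k}.Nonempty := by
    set B := (Finset.univ : Finset (Finset (Sym2 V))).toList.filter
      (fun C => decide (IsF2CycleIn E C)) with hBdef
    refine ⟨B.length, B, ?_, ?_, fun e => List.countP_le_length⟩
    · intro X hX
      rw [hBdef, List.mem_filter] at hX
      exact of_decide_eq_true hX.2
    · intro C hC
      refine ⟨[C], List.singleton_sublist.mpr ?_, by
        rw [List.foldr_cons, List.foldr_nil, show (∅ : Finset (Sym2 V)) = ⊥ from rfl,
          symmDiff_bot]⟩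
      rw [hBdef, List.mem_filter]
      exact ⟨by simp [Finset.mem_toList], decide_eq_true hC⟩
  exact Nat.sInf_mem hne

end AuxLemmas

/-- if `G = G_X ∪ G_Y` with `G_X ∩ G_Y` connected, generating sets of the
cycle spaces of `G_X` and `G_Y` together generate the cycle space of `G`; consequently
`bn(G) ≤ bn(G_X) + bn(G_Y)`. -/
theorem generates_union_of_connected_inter (G : SimpleGraph V) (GX GY : G.Subgraph)
    (hunion : GX ⊔ GY = ⊤) (hconn : (GX ⊓ GY).Connected)
    (BX BY : List (Finset (Sym2 V)))
    (hBX : GeneratesIn GX.edgeSet BX) (hBY : GeneratesIn GY.edgeSet BY) :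
    GeneratesIn G.edgeSet (BX ++ BY) ∧
      G.bn ≤ bnSet GX.edgeSet + bnSet GY.edgeSet := by
  classical
  refine ⟨generates_aux GX GY hunion hconn BX BY hBX hBY, ?_⟩
  obtain ⟨BX', hBX'c, hBX'g, hBX'cnt⟩ := bnSet_spec GX.edgeSet
  obtain ⟨BY', hBY'c, hBY'g, hBY'cnt⟩ := bnSet_spec GY.edgeSet
  have hgen' := generates_aux GX GY hunion hconn BX' BY' hBX'g hBY'g
  refine Nat.sInf_le ⟨BX' ++ BY', ?_, hgen', ?_⟩
  · intro X hX
    rcases List.mem_append.mp hX with h | h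
    · exact ⟨fun e he => GX.edgeSet_subset ((hBX'c X h).1 e he), (hBX'c X h).2⟩
    · exact ⟨fun e he => GY.edgeSet_subset ((hBY'c X h).1 e he), (hBY'c X h).2⟩
  · intro e
    rw [List.countP_append]
    exact Nat.add_le_add (hBX'cnt e) (hBY'cnt e)
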